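/- Let p be a probability distribution on Fin k, let δ ∈ (0,1) and ε > 0, and let p̂ be the empirical distribution of n independent samples from p. If n ≥ (2/ε²)·(k·log 2 + log(1/δ)), then the probability that ‖p̂ − p‖₁ > ε is at most δ. -/

import Mathlib

open MeasureTheory ProbabilityTheory

open Real

/-- tanh (as sinh/cosh) is 1-Lipschitz (one direction). -/
lemma tanh_sub_le {x y : ℝ} (h : x ≤ y) :
    Real.sinh y / Real.cosh y - Real.sinh x / Real.cosh x ≤ y - x := by
  have hmono : Monotone (fun z : ℝ => z - Real.sinh z / Real.cosh z) := by
    apply monotone_of_deriv_nonneg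
    · intro z
      exact (differentiableAt_id.sub ((Real.differentiable_sinh z).div
        (Real.differentiable_cosh z) (Real.cosh_pos z).ne'))
    · intro z
      have hd : HasDerivAt (fun z : ℝ => z - Real.sinh z / Real.cosh z)
          (1 - (Real.cosh z * Real.cosh z - Real.sinh z * Real.sinh z) / Real.cosh z ^ 2) z := by
        exact (hasDerivAt_id z).sub
          (((Real.hasDerivAt_sinh z).div (Real.hasDerivAt_cosh z) (Real.cosh_pos z).ne'))
      rw [hd.deriv]
      have h1 : Real.cosh z * Real.cosh z - Real.sinh z * Real.sinh z = 1 := by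
        have := Real.cosh_sq_sub_sinh_sq z
        nlinarith [this]
      rw [h1]
      have h2 : (1 : ℝ) ≤ Real.cosh z ^ 2 := by nlinarith [Real.one_le_cosh z]
      have := div_le_one_of_le₀ h2 (by positivity)
      linarith [div_le_one_of_le₀ h2 (sq_nonneg (Real.cosh z))]
  have := hmono h
  simp only at this
  linarith

/-- log-cosh quadratic upper bound. -/
lemma log_cosh_add_le (a : ℝ) {t : ℝ} (ht : 0 ≤ t) :
    Real.log (Real.cosh (a + t)) ≤
      Real.log (Real.cosh a) + t * (Real.sinh a / Real.cosh a) + t ^ 2 / 2 := by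
  set G : ℝ → ℝ := fun u => Real.log (Real.cosh a) + u * (Real.sinh a / Real.cosh a) + u ^ 2 / 2
      - Real.log (Real.cosh (a + u)) with hG
  have hderiv : ∀ u : ℝ, HasDerivAt G
      (Real.sinh a / Real.cosh a + u - Real.sinh (a + u) / Real.cosh (a + u)) u := by
    intro u
    have h1 : HasDerivAt (fun u : ℝ => Real.log (Real.cosh (a + u)))
        (Real.sinh (a + u) / Real.cosh (a + u)) u := by
      have hc : HasDerivAt (fun u : ℝ => Real.cosh (a + u)) (Real.sinh (a + u)) u := by
        have := (Real.hasDerivAt_cosh (a + u)).comp u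
          ((hasDerivAt_const u a).add (hasDerivAt_id u))
        exact this.congr_deriv (by simp)
      simpa using hc.log (Real.cosh_pos (a + u)).ne'
    have h2 : HasDerivAt (fun u : ℝ => Real.log (Real.cosh a) + u * (Real.sinh a / Real.cosh a)
        + u ^ 2 / 2) (Real.sinh a / Real.cosh a + u) u := by
      have ha : HasDerivAt (fun u : ℝ => u * (Real.sinh a / Real.cosh a))
          (Real.sinh a / Real.cosh a) u := by
        simpa using (hasDerivAt_id u).mul_const (Real.sinh a / Real.cosh a)
      have hb : HasDerivAt (fun u : ℝ => u ^ 2 / 2) u u := by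
        have := (hasDerivAt_pow 2 u).div_const 2
        simpa using this
      exact (((hasDerivAt_const u (Real.log (Real.cosh a))).add ha).add hb).congr_deriv (by simp)
    exact h2.sub h1
  have hmono : MonotoneOn G (Set.Ici (0:ℝ)) := by
    apply monotoneOn_of_deriv_nonneg (convex_Ici 0)
    · exact fun u _ => ((hderiv u).continuousAt).continuousWithinAt
    · exact fun u _ => ((hderiv u).differentiableAt).differentiableWithinAt
    · intro u hu
      rw [(hderiv u).deriv]
      rw [interior_Ici] at hu
      have hle : Real.sinh (a + u) / Real.cosh (a + u) - Real.sinh a / Real.cosh a ≤ u := by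
        have := tanh_sub_le (x := a) (y := a + u) (by linarith [le_of_lt (Set.mem_Ioi.1 hu)])
        simpa using this
      linarith
  have h0 : G 0 = 0 := by simp [hG]
  have := hmono (Set.self_mem_Ici) (Set.mem_Ici.2 ht) ht
  rw [h0] at this
  simp only [hG] at this
  linarith

/-- Key Hoeffding-type mgf bound for `±1`-valued variables. -/
lemma cosh_add_mul_sinh_le {m t : ℝ} (hm1 : -1 ≤ m) (hm2 : m ≤ 1) (ht : 0 ≤ t) :
    Real.cosh t + m * Real.sinh t ≤ Real.exp (t * m + t ^ 2 / 2) := by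
  rcases eq_or_lt_of_le hm2 with h1 | h1
  · subst h1
    rw [one_mul, Real.cosh_add_sinh]
    exact Real.exp_le_exp.2 (by nlinarith [sq_nonneg t])
  rcases eq_or_lt_of_le hm1 with h2 | h2
  · rw [← h2]
    have : Real.cosh t + -1 * Real.sinh t = Real.exp (-t) := by
      rw [← Real.cosh_sub_sinh]; ring
    rw [this]
    exact Real.exp_le_exp.2 (by nlinarith [sq_nonneg t])
  -- |m| < 1 : set a with tanh a = m
  set u : ℝ := Real.sqrt ((1 + m) / (1 - m)) with hu
  have h1m : (0:ℝ) < 1 - m := by linarith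
  have h1p : (0:ℝ) < 1 + m := by linarith
  have hupos : 0 < u := Real.sqrt_pos.2 (by positivity)
  have hu2 : u ^ 2 = (1 + m) / (1 - m) := Real.sq_sqrt (by positivity)
  set a : ℝ := Real.log u with ha
  have hea : Real.exp a = u := Real.exp_log hupos
  have hena : Real.exp (-a) = u⁻¹ := by rw [Real.exp_neg, hea]
  have hsinh : Real.sinh a = (u - u⁻¹) / 2 := by rw [Real.sinh_eq, hea, hena]
  have hcosh : Real.cosh a = (u + u⁻¹) / 2 := by rw [Real.cosh_eq, hea, hena]
  have htanh : Real.sinh a / Real.cosh a = m := by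
    rw [hsinh, hcosh]
    have hne : u ≠ 0 := hupos.ne'
    have hden : (0:ℝ) < u + u⁻¹ := by positivity
    have huu : u * u * (1 - m) = 1 + m := by
      have : u ^ 2 * (1 - m) = (1 + m) / (1 - m) * (1 - m) := by rw [hu2]
      rw [div_mul_cancel₀ _ h1m.ne'] at this
      nlinarith [this]
    rw [div_div_div_cancel_right₀]
    · rw [div_eq_iff hden.ne']
      field_simp
      nlinarith [huu]
    · norm_num
  have hkey := log_cosh_add_le a ht
  rw [htanh] at hkey
  have hcoshpos := Real.cosh_pos a
  have hcoshpos2 := Real.cosh_pos (a + t)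
  have hexp := Real.exp_le_exp.2 hkey
  rw [Real.exp_log hcoshpos2] at hexp
  rw [Real.exp_add, Real.exp_add, Real.exp_log hcoshpos] at hexp
  have hid : Real.cosh (a + t) = Real.cosh a * (Real.cosh t + m * Real.sinh t) := by
    rw [Real.cosh_add]
    rw [← htanh]
    field_simp
  rw [hid, mul_assoc] at hexp
  have := (mul_le_mul_iff_right₀ hcoshpos).1 hexp
  calc Real.cosh t + m * Real.sinh t ≤ Real.exp (t * m) * Real.exp (t ^ 2 / 2) := this
    _ = Real.exp (t * m + t ^ 2 / 2) := (Real.exp_add _ _).symm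

open MeasureTheory ProbabilityTheory

lemma integral_comp_fin {Ω : Type*} [MeasurableSpace Ω] (μ : Measure Ω) [IsProbabilityMeasure μ]
    {k : ℕ} (X : Ω → Fin k) (hX : Measurable X) (f : Fin k → ℝ) :
    ∫ ω, f (X ω) ∂μ = ∑ j, f j * (μ {ω | X ω = j}).toReal := by
  have hset : ∀ j : Fin k, MeasurableSet {ω | X ω = j} := by
    intro j
    have : {ω | X ω = j} = X ⁻¹' {j} := by ext ω; simp
    rw [this]; exact hX (measurableSet_singleton j)
  have hpt : ∀ ω, f (X ω) = ∑ j, Set.indicator {ω' | X ω' = j} (fun _ => f j) ω := by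
    intro ω
    simp only [Set.indicator_apply, Set.mem_setOf_eq]
    rw [Finset.sum_ite_eq Finset.univ (X ω) f]
    simp
  rw [integral_congr_ae (Filter.Eventually.of_forall hpt)]
  rw [integral_finset_sum _ (fun j _ => (integrable_const (f j)).indicator (hset j))]
  refine Finset.sum_congr rfl fun j _ => ?_
  rw [integral_indicator_const _ (hset j)]
  rw [smul_eq_mul, mul_comm]
  rfl

lemma chernoff_sign {Ω : Type*} [MeasurableSpace Ω] (μ : Measure Ω) [IsProbabilityMeasure μ]
    (k n : ℕ) (p : Fin k → ℝ) (hp0 : ∀ j, 0 ≤ p j) (hp1 : ∑ j, p j = 1)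
    (X : Fin n → Ω → Fin k) (hXmeas : ∀ i, Measurable (X i))
    (hindep : iIndepFun X μ)
    (hlaw : ∀ i j, (μ {ω | X i ω = j}).toReal = p j)
    (g : Fin k → ℝ) (hg : ∀ j, g j = 1 ∨ g j = -1) (ε : ℝ) (hε : 0 < ε) :
    (μ {ω | (n:ℝ) * ((∑ j, g j * p j) + ε) ≤ ∑ i, g (X i ω)}).toReal
      ≤ Real.exp (-((n:ℝ) * ε ^ 2 / 2)) := by
  classical
  set m : ℝ := ∑ j, g j * p j with hm
  set Y : Fin n → Ω → ℝ := fun i ω => g (X i ω) with hY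
  have hgm : Measurable g := measurable_of_countable g
  have hYmeas : ∀ i, Measurable (Y i) := fun i => hgm.comp (hXmeas i)
  have hYindep : iIndepFun Y μ :=
    hindep.comp (fun _ => g) (fun _ => hgm)
  have habs : ∀ j, |g j| = 1 := by
    intro j; rcases hg j with h | h <;> rw [h] <;> norm_num
  have hSb : ∀ ω, |∑ i, g (X i ω)| ≤ (n : ℝ) := by
    intro ω
    calc |∑ i, g (X i ω)| ≤ ∑ i, |g (X i ω)| := Finset.abs_sum_le_sum_abs _ _
      _ = ∑ _i : Fin n, (1:ℝ) := Finset.sum_congr rfl fun i _ => habs _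
      _ = (n : ℝ) := by simp
  have hSsum : (∑ i, Y i) = (fun ω => ∑ i, g (X i ω)) := by
    funext ω; rw [Finset.sum_apply]
  have hint : Integrable (fun ω => Real.exp (ε * (∑ i, Y i) ω)) μ := by
    rw [hSsum]
    refine Integrable.mono' (integrable_const (Real.exp (ε * n)))
      ?_ (Filter.Eventually.of_forall fun ω => ?_)
    · exact ((Finset.measurable_sum Finset.univ fun i _ => hYmeas i).const_mul ε).exp
        |>.aestronglyMeasurable
    · rw [Real.norm_eq_abs, Real.abs_exp]
      apply Real.exp_le_exp.2
      have := hSb ω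
      have h1 : ∑ i, g (X i ω) ≤ (n:ℝ) := (abs_le.1 this).2
      nlinarith
  have hch := measure_ge_le_exp_mul_mgf (μ := μ) (X := ∑ i, Y i)
    ((n:ℝ) * (m + ε)) hε.le hint
  rw [hSsum] at hch
  refine hch.trans ?_
  -- bound the mgf
  have hmgf_sum : mgf (∑ i, Y i) μ ε = ∏ i, mgf (Y i) μ ε :=
    hYindep.mgf_sum hYmeas Finset.univ
  rw [hSsum] at hmgf_sum
  have hm_abs : |m| ≤ 1 := by
    rw [hm]
    calc |∑ j, g j * p j| ≤ ∑ j, |g j * p j| := Finset.abs_sum_le_sum_abs _ _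
      _ = ∑ j, p j := Finset.sum_congr rfl fun j _ => by
          rw [abs_mul, habs j, one_mul, abs_of_nonneg (hp0 j)]
      _ = 1 := hp1
  have hmgf_one : ∀ i, mgf (Y i) μ ε ≤ Real.exp (ε * m + ε ^ 2 / 2) := by
    intro i
    have h1 : mgf (Y i) μ ε = ∑ j, Real.exp (ε * g j) * p j := by
      rw [mgf]
      have h0 := integral_comp_fin μ (X i) (hXmeas i) (fun j => Real.exp (ε * g j))
      simp only [hY]
      rw [h0]
      exact Finset.sum_congr rfl fun j _ => by rw [hlaw i j]
    have h2 : ∀ j, Real.exp (ε * g j) = Real.cosh ε + g j * Real.sinh ε := by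
      intro j
      rcases hg j with h | h <;> rw [h]
      · rw [mul_one, one_mul, Real.cosh_add_sinh]
      · rw [show ε * (-1:ℝ) = -ε by ring,
          show Real.cosh ε + (-1) * Real.sinh ε = Real.cosh ε - Real.sinh ε by ring,
          Real.cosh_sub_sinh]
    have h3 : mgf (Y i) μ ε = Real.cosh ε + m * Real.sinh ε := by
      rw [h1]
      rw [Finset.sum_congr rfl fun j _ => by rw [h2 j]]
      rw [hm]
      rw [Finset.sum_congr rfl (fun j _ => add_mul (Real.cosh ε) (g j * Real.sinh ε) (p j)),
        Finset.sum_add_distrib, ← Finset.mul_sum, hp1, mul_one]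
      congr 1
      rw [Finset.sum_mul]
      refine Finset.sum_congr rfl fun j _ => by ring
    rw [h3]
    exact cosh_add_mul_sinh_le (abs_le.1 hm_abs).1 (abs_le.1 hm_abs).2 hε.le
  have hprod : ∏ i : Fin n, mgf (Y i) μ ε ≤ Real.exp ((n:ℝ) * (ε * m + ε ^ 2 / 2)) := by
    calc ∏ i : Fin n, mgf (Y i) μ ε ≤ ∏ _i : Fin n, Real.exp (ε * m + ε ^ 2 / 2) :=
        Finset.prod_le_prod (fun i _ => mgf_nonneg) (fun i _ => hmgf_one i)
      _ = Real.exp (ε * m + ε ^ 2 / 2) ^ n := by simp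
      _ = Real.exp ((n:ℝ) * (ε * m + ε ^ 2 / 2)) := by rw [← Real.exp_nat_mul]
  rw [hmgf_sum]
  calc Real.exp (-ε * ((n:ℝ) * (m + ε))) * ∏ i, mgf (Y i) μ ε
      ≤ Real.exp (-ε * ((n:ℝ) * (m + ε))) * Real.exp ((n:ℝ) * (ε * m + ε ^ 2 / 2)) := by
        exact mul_le_mul_of_nonneg_left hprod (Real.exp_nonneg _)
    _ = Real.exp (-((n:ℝ) * ε ^ 2 / 2)) := by
        rw [← Real.exp_add]; congr 1; ring


/-- Let `p` be a probability distribution on `Fin k`, let `δ ∈ (0,1)` and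
`ε > 0`, and let `phat` be the empirical distribution of `n` independent samples from `p`.
If `n ≥ (2/ε²) * (k * log 2 + log (1/δ))`, then the probability that `‖phat - p‖₁ > ε` is at
most `δ`. -/
theorem empirical_l1_sample_size
    {Ω : Type*} [MeasurableSpace Ω] (μ : Measure Ω) [IsProbabilityMeasure μ]
    (k n : ℕ) (p : Fin k → ℝ) (hp0 : ∀ j, 0 ≤ p j) (hp1 : ∑ j, p j = 1)
    (X : Fin n → Ω → Fin k) (hXmeas : ∀ i, Measurable (X i))
    (hindep : iIndepFun X μ)
    (hlaw : ∀ i j, (μ {ω | X i ω = j}).toReal = p j)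
    (phat : Ω → Fin k → ℝ)
    (hphat : ∀ ω j, phat ω j
      = (1 / (n : ℝ)) * (Finset.univ.filter (fun i => X i ω = j)).card)
    (δ : ℝ) (hδ0 : 0 < δ) (hδ1 : δ < 1) (ε : ℝ) (hε : 0 < ε)
    (hn : (2 / ε ^ 2) * (k * Real.log 2 + Real.log (1 / δ)) ≤ (n : ℝ)) :
    (μ {ω | ε < ∑ j, |phat ω j - p j|}).toReal ≤ δ := by
  classical
  have hlogδ : 0 < Real.log (1 / δ) := Real.log_pos (one_lt_one_div hδ0 hδ1)
  have hklog : 0 ≤ (k : ℝ) * Real.log 2 := by positivity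
  have hnpos : 0 < (n : ℝ) := by
    by_contra h
    push_neg at h
    have : (0:ℝ) < (2 / ε ^ 2) * (k * Real.log 2 + Real.log (1 / δ)) := by positivity
    linarith
  -- the sign functions
  set g : (Fin k → Bool) → Fin k → ℝ := fun b j => if b j then 1 else -1 with hgdef
  set Ev : (Fin k → Bool) → Set Ω :=
    fun b => {ω | (n:ℝ) * ((∑ j, g b j * p j) + ε) ≤ ∑ i, g b (X i ω)} with hEv
  -- inclusion
  have hsub : {ω | ε < ∑ j, |phat ω j - p j|} ⊆ ⋃ b : Fin k → Bool, Ev b := by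
    intro ω hω
    rw [Set.mem_setOf_eq] at hω
    set b : Fin k → Bool := fun j => decide (p j ≤ phat ω j) with hb
    refine Set.mem_iUnion.2 ⟨b, ?_⟩
    have habs : ∑ j, |phat ω j - p j| = ∑ j, g b j * (phat ω j - p j) := by
      refine Finset.sum_congr rfl fun j _ => ?_
      by_cases h : p j ≤ phat ω j
      · have hbj : b j = true := by simp [hb, h]
        have hgj : g b j = 1 := by simp [hgdef, hbj]
        rw [hgj, one_mul]
        exact abs_of_nonneg (by linarith)
      · have hbj : b j = false := by simp [hb, h]
        have hgj : g b j = -1 := by simp [hgdef, hbj]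
        rw [hgj, neg_one_mul]
        exact abs_of_neg (by push_neg at h; linarith)
    have hcount : ∑ j, g b j * phat ω j = (1 / (n:ℝ)) * ∑ i, g b (X i ω) := by
      rw [← Finset.sum_fiberwise' Finset.univ (fun i => X i ω) (g b)]
      rw [Finset.mul_sum]
      refine Finset.sum_congr rfl fun j _ => ?_
      rw [hphat ω j, Finset.sum_const, nsmul_eq_mul]
      ring
    have hexp : ∑ j, g b j * (phat ω j - p j)
        = (1 / (n:ℝ)) * ∑ i, g b (X i ω) - ∑ j, g b j * p j := by
      rw [← hcount, ← Finset.sum_sub_distrib]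
      refine Finset.sum_congr rfl fun j _ => by ring
    rw [habs, hexp] at hω
    rw [hEv, Set.mem_setOf_eq]
    rw [lt_sub_iff_add_lt] at hω
    have h2 := (mul_lt_mul_iff_right₀ hnpos).2 hω
    have h3 : (n:ℝ) * (1 / (n:ℝ) * ∑ i, g b (X i ω)) = ∑ i, g b (X i ω) := by
      field_simp
    rw [h3] at h2
    calc (n:ℝ) * ((∑ j, g b j * p j) + ε) = (n:ℝ) * (ε + ∑ j, g b j * p j) := by ring
      _ ≤ ∑ i, g b (X i ω) := h2.le
  -- measure bound
  have hEvone : ∀ b, (μ (Ev b)).toReal ≤ Real.exp (-((n:ℝ) * ε ^ 2 / 2)) := by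
    intro b
    exact chernoff_sign μ k n p hp0 hp1 X hXmeas hindep hlaw (g b)
      (fun j => by by_cases h : b j <;> simp [hgdef, h]) ε hε
  have hmono := measure_mono (μ := μ) hsub
  have hunion : μ (⋃ b : Fin k → Bool, Ev b) ≤ ∑ b : Fin k → Bool, μ (Ev b) := by
    have := measure_biUnion_finset_le (μ := μ) (Finset.univ : Finset (Fin k → Bool)) Ev
    simpa using this
  have hfin : ∀ b ∈ (Finset.univ : Finset (Fin k → Bool)), μ (Ev b) ≠ ⊤ :=
    fun b _ => measure_ne_top μ _
  have h1 : (μ {ω | ε < ∑ j, |phat ω j - p j|}).toReal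
      ≤ (∑ b : Fin k → Bool, μ (Ev b)).toReal := by
    refine ENNReal.toReal_mono ?_ (hmono.trans hunion)
    exact (ENNReal.sum_lt_top.2 fun b _ => (measure_ne_top μ _).lt_top).ne
  rw [ENNReal.toReal_sum hfin] at h1
  have h2 : ∑ b : Fin k → Bool, (μ (Ev b)).toReal
      ≤ (2:ℝ) ^ k * Real.exp (-((n:ℝ) * ε ^ 2 / 2)) := by
    calc ∑ b : Fin k → Bool, (μ (Ev b)).toReal
        ≤ ∑ _b : Fin k → Bool, Real.exp (-((n:ℝ) * ε ^ 2 / 2)) :=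
          Finset.sum_le_sum fun b _ => hEvone b
      _ = (2:ℝ) ^ k * Real.exp (-((n:ℝ) * ε ^ 2 / 2)) := by
          rw [Finset.sum_const, Finset.card_univ, nsmul_eq_mul]
          congr 1
          simp [Fintype.card_fun]
  -- numeric conclusion
  have hkey : (k:ℝ) * Real.log 2 + Real.log (1 / δ) ≤ (n:ℝ) * ε ^ 2 / 2 := by
    have hε2 : (0:ℝ) < ε ^ 2 := by positivity
    have h4 := mul_le_mul_of_nonneg_right hn hε2.le
    have h5 : 2 / ε ^ 2 * ((k:ℝ) * Real.log 2 + Real.log (1 / δ)) * ε ^ 2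
        = 2 * ((k:ℝ) * Real.log 2 + Real.log (1 / δ)) := by
      field_simp
    rw [h5] at h4
    nlinarith
  have hnum : (2:ℝ) ^ k * Real.exp (-((n:ℝ) * ε ^ 2 / 2)) ≤ δ := by
    have hexp2 : Real.exp ((k:ℝ) * Real.log 2) = 2 ^ k := by
      rw [Real.exp_nat_mul, Real.exp_log (by norm_num : (0:ℝ) < 2)]
    have : Real.exp (-((n:ℝ) * ε ^ 2 / 2))
        ≤ Real.exp (-((k:ℝ) * Real.log 2 + Real.log (1 / δ))) :=
      Real.exp_le_exp.2 (by linarith)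
    have heq : Real.exp (-((k:ℝ) * Real.log 2 + Real.log (1 / δ)))
        = ((2:ℝ) ^ k)⁻¹ * δ := by
      rw [neg_add, Real.exp_add, Real.exp_neg, hexp2]
      congr 1
      rw [one_div, Real.log_inv, neg_neg, Real.exp_log hδ0]
    rw [heq] at this
    calc (2:ℝ) ^ k * Real.exp (-((n:ℝ) * ε ^ 2 / 2)) ≤ (2:ℝ) ^ k * (((2:ℝ) ^ k)⁻¹ * δ) :=
        mul_le_mul_of_nonneg_left this (by positivity)
      _ = δ := by field_simp
  linarith
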